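/- Let R be a noetherian local ring and t ∈ R a nonzerodivisor such that the quotient R/(t) is regular (or more generally such that Spec(R/(t)) is smooth over a base). Then the t-adic completion of R, as an algebra over R/(t), admits a ring homomorphism section; in particular there is a retraction ρ: Spec(R̂) → Spec(R/(t)) of the closed immersion Spec(R/(t)) → Spec(R̂) when R is a smooth algebra over an excellent base and R/(t) is smooth over the same base. -/

import Mathlib

universe u

open AdicCompletion DoubleQuot

section Aux

variable (k : Type u) {R : Type u} [CommRing k] [CommRing R] [Algebra k R] (I : Ideal R)
  [Algebra.FormallySmooth k (R ⧸ I)]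

lemma aux_le (n : ℕ) : (I ^ (n + 2) • ⊤ : Ideal R) ≤ (I ^ (n + 1) • ⊤ : Ideal R) := by
  exact Submodule.smul_mono (Ideal.pow_le_pow_right (by omega)) le_rfl

lemma aux_nilpotent (n : ℕ) :
    IsNilpotent ((I ^ (n + 1) • ⊤ : Ideal R).map
      (Ideal.Quotient.mkₐ k (I ^ (n + 2) • ⊤ : Ideal R))) := by
  refine ⟨2, ?_⟩
  have h1 : ((I ^ (n + 1) • ⊤ : Ideal R)) ^ 2 ≤ (I ^ (n + 2) • ⊤ : Ideal R) := by
    simp only [smul_eq_mul, Ideal.mul_top, ← pow_mul]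
    exact Ideal.pow_le_pow_right (by omega)
  have : ((I ^ (n + 1) • ⊤ : Ideal R).map
      (Ideal.Quotient.mkₐ k (I ^ (n + 2) • ⊤ : Ideal R))) ^ 2 =
      (((I ^ (n + 1) • ⊤ : Ideal R)) ^ 2).map
        (Ideal.Quotient.mkₐ k (I ^ (n + 2) • ⊤ : Ideal R)) := by
    rw [Ideal.map_pow]
  rw [this, Ideal.zero_eq_bot, ← le_bot_iff]
  refine Ideal.map_le_iff_le_comap.mpr ?_
  intro x hx
  have : (Ideal.Quotient.mk (I ^ (n + 2) • ⊤ : Ideal R)) x = 0 :=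
    Ideal.Quotient.eq_zero_iff_mem.mpr (h1 hx)
  simpa [Ideal.mem_comap] using this

/-- The inductively constructed compatible lifts `R/I → R/(I^(n+1))`. -/
noncomputable def liftSeq : (n : ℕ) → ((R ⧸ I) →ₐ[k] R ⧸ (I ^ (n + 1) • ⊤ : Ideal R))
  | 0 => (Ideal.quotientEquivAlgOfEq k
      (by simp : I = (I ^ (0 + 1) • ⊤ : Ideal R))).toAlgHom
  | (n + 1) =>
    Algebra.FormallySmooth.lift
      ((I ^ (n + 1) • ⊤ : Ideal R).map (Ideal.Quotient.mkₐ k (I ^ (n + 2) • ⊤ : Ideal R)))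
      (aux_nilpotent k I n)
      (((quotQuotEquivQuotOfLEₐ k (aux_le I n)).symm.toAlgHom).comp (liftSeq n))

lemma liftSeq_succ (n : ℕ) (x : R ⧸ I) :
    AdicCompletion.transitionMap I R (Nat.le_succ (n + 1)) (liftSeq k I (n + 1) x)
      = liftSeq k I n x := by
  obtain ⟨r, hr⟩ := Ideal.Quotient.mk_surjective (liftSeq k I (n + 1) x)
  have hk := Algebra.FormallySmooth.mk_lift
    ((I ^ (n + 1) • ⊤ : Ideal R).map (Ideal.Quotient.mkₐ k (I ^ (n + 2) • ⊤ : Ideal R)))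
    (aux_nilpotent k I n)
    (((quotQuotEquivQuotOfLEₐ k (aux_le I n)).symm.toAlgHom).comp (liftSeq k I n)) x
  rw [show Algebra.FormallySmooth.lift
      ((I ^ (n + 1) • ⊤ : Ideal R).map (Ideal.Quotient.mkₐ k (I ^ (n + 2) • ⊤ : Ideal R)))
      (aux_nilpotent k I n)
      (((quotQuotEquivQuotOfLEₐ k (aux_le I n)).symm.toAlgHom).comp (liftSeq k I n)) x
      = liftSeq k I (n + 1) x from rfl, ← hr] at hk
  apply_fun quotQuotEquivQuotOfLEₐ k (aux_le I n) at hk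
  simp only [AlgHom.coe_comp, AlgEquiv.toAlgHom_eq_coe, AlgHom.coe_coe, Function.comp_apply,
    AlgEquiv.apply_symm_apply, AlgEquiv.coe_toAlgHom] at hk
  have : quotQuotEquivQuotOfLEₐ k (aux_le I n)
      ((Ideal.Quotient.mk _) ((Ideal.Quotient.mk _) r))
      = Ideal.Quotient.mk (I ^ (n + 1) • ⊤ : Ideal R) r := rfl
  rw [this] at hk
  rw [← hr, ← hk]
  rfl

/-- The full family, including the trivial level `0`. -/
noncomputable def liftF : (n : ℕ) → ((R ⧸ I) →ₐ[k] R ⧸ (I ^ n • ⊤ : Ideal R))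
  | 0 =>
    haveI : Subsingleton (R ⧸ (I ^ 0 • ⊤ : Ideal R)) := by
      refine Submodule.Quotient.subsingleton_iff.mpr ?_
      simp
    { toFun := fun _ => 0
      map_one' := Subsingleton.elim _ _
      map_mul' := fun _ _ => Subsingleton.elim _ _
      map_zero' := Subsingleton.elim _ _
      map_add' := fun _ _ => Subsingleton.elim _ _
      commutes' := fun _ => Subsingleton.elim _ _ }
  | (n + 1) => liftSeq k I n

lemma liftF_succ (n : ℕ) (x : R ⧸ I) :
    AdicCompletion.transitionMap I R (Nat.le_succ n) (liftF k I (n + 1) x) = liftF k I n x := by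
  cases n with
  | zero =>
    haveI : Subsingleton (R ⧸ (I ^ 0 • ⊤ : Ideal R)) := by
      refine Submodule.Quotient.subsingleton_iff.mpr ?_
      simp
    exact Subsingleton.elim _ _
  | succ n => exact liftSeq_succ k I n x

lemma liftF_compat :
    ∀ (n m : ℕ) (h : m ≤ n) (x : R ⧸ I),
      AdicCompletion.transitionMap I R h (liftF k I n x) = liftF k I m x := by
  intro n
  induction n with
  | zero =>
    intro m h x
    interval_cases m
    haveI : Subsingleton (R ⧸ (I ^ 0 • ⊤ : Ideal R)) := by
      refine Submodule.Quotient.subsingleton_iff.mpr ?_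
      simp
    exact Subsingleton.elim _ _
  | succ n ih =>
    intro m h x
    rcases Nat.eq_or_lt_of_le h with rfl | hlt
    · obtain ⟨r, hr⟩ := Ideal.Quotient.mk_surjective (liftF k I (n + 1) x)
      rw [← hr]
      rfl
    · have hm : m ≤ n := Nat.lt_succ_iff.mp hlt
      have key : ∀ y, AdicCompletion.transitionMap I R hm
          (AdicCompletion.transitionMap I R (Nat.le_succ n) y) = AdicCompletion.transitionMap I R h y := by
        intro y
        obtain ⟨r, rfl⟩ := Submodule.Quotient.mk_surjective _ y
        rfl
      rw [← key,
        liftF_succ k I n x, ih m hm x]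

end Aux

/-- Let `R` be a noetherian local ring and `t ∈ R` a nonzerodivisor such that the quotient
`R/(t)` is (formally) smooth over the base `k` (e.g. `Spec (R/(t))` smooth over the base; over a
field this includes the case where `R/(t)` is regular).  Then the `t`-adic completion of `R`
admits, as an algebra over `R/(t)`, a ring homomorphism section: there is a `k`-algebra map
`σ : R/(t) → R̂` whose composite with the canonical projection `R̂ → R/(t)` is the identity.
Geometrically this is the retraction `ρ : Spec R̂ → Spec (R/(t))` of the closed immersion
`Spec (R/(t)) → Spec R̂`. -/
theorem section_of_adic_completion_of_smooth_divisor
    (k R : Type u) [CommRing k] [CommRing R] [Algebra k R]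
    [IsNoetherianRing R] [IsLocalRing R]
    (t : R) (ht : t ∈ nonZeroDivisors R)
    [Algebra.FormallySmooth k (R ⧸ Ideal.span {t})] :
    ∃ σ : (R ⧸ Ideal.span {t}) →+* AdicCompletion (Ideal.span {t}) R,
      (∀ c : k, σ (algebraMap k _ c) = algebraMap R _ (algebraMap k R c)) ∧
      (∀ r : R,
        AdicCompletion.eval (Ideal.span {t}) R 1 (σ (Ideal.Quotient.mk _ r)) =
          Submodule.Quotient.mk r) := by
  set I : Ideal R := Ideal.span {t} with hI
  refine ⟨{
      toFun := fun x => ⟨fun n => liftF k I n x, fun {m n} h => liftF_compat k I n m h x⟩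
      map_one' := by
        apply AdicCompletion.ext
        intro n
        show liftF k I n 1 = (1 : AdicCompletion I R).val n
        rw [AdicCompletion.val_one, map_one]
      map_mul' := by
        intro x y
        apply AdicCompletion.ext
        intro n
        show liftF k I n (x * y) = liftF k I n x * liftF k I n y
        exact map_mul _ _ _
      map_zero' := by
        apply AdicCompletion.ext
        intro n
        show liftF k I n 0 = (0 : AdicCompletion I R).val n
        rw [AdicCompletion.val_zero, _root_.map_zero]
        rfl
      map_add' := by
        intro x y
        apply AdicCompletion.ext
        intro n
        show liftF k I n (x + y) = liftF k I n x + liftF k I n y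
        exact map_add _ _ _ }, ?_, ?_⟩
  · intro c
    apply AdicCompletion.ext
    intro n
    show liftF k I n (algebraMap k _ c) = _
    rw [AlgHom.commutes]
    have h1 : (algebraMap R (AdicCompletion I R) (algebraMap k R c)).val n
        = Submodule.Quotient.mk (algebraMap k R c) := rfl
    rw [h1]
    rfl
  · intro r
    rw [AdicCompletion.eval_apply]
    show liftSeq k I 0 (Ideal.Quotient.mk I r) = _
    show (Ideal.quotientEquivAlgOfEq k _) (Ideal.Quotient.mk I r) = _
    rw [Ideal.quotientEquivAlgOfEq_mk]
    rfl
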